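/- Let L ⊂ ℂ be a lattice and {v, v'} a positively oriented basis with v' of minimal norm among all completions of v. Then the angle α between v and v' satisfies sin α ≥ area(L)/((|v|/2)² + (area(L)/|v|)²)^{1/2} / |v|, in particular sin α ≥ 2·area(L)/|v|² · (1 + O(1/|v|⁴)). -/

import Mathlib

noncomputable section

open Complex

/-- `{v, v'}` is a positively oriented ℤ-basis of the lattice `L ⊆ ℂ`. -/
def IsOrientedBasis (L : AddSubgroup ℂ) (v v' : ℂ) : Prop :=
  0 < (v' / v).im ∧ AddSubgroup.closure {v, v'} = L

/-- `v` is a primitive vector of `L`: it can be completed to a basis of `L`. -/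
def IsPrimitive (L : AddSubgroup ℂ) (v : ℂ) : Prop :=
  ∃ v', IsOrientedBasis L v v'

/-- `v'` has minimal norm among completions of `v` to a positively oriented basis of `L`. -/
def IsMinCompletion (L : AddSubgroup ℂ) (v v' : ℂ) : Prop :=
  IsOrientedBasis L v v' ∧ ∀ w, IsOrientedBasis L v w → ‖v'‖ ≤ ‖w‖

/-- The (signed) area of the parallelogram spanned by `v, v'`; it is positive
when `{v, v'}` is positively oriented, and equals `|v||v'| sin α`. -/
def pArea (v v' : ℂ) : ℝ := ((starRingEnd ℂ) v * v').im

lemma pArea_eq (x y : ℂ) : pArea x y = x.re * y.im - x.im * y.re := by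
  simp [pArea, Complex.mul_im]; ring

lemma pArea_smul (a b c d : ℤ) (x y : ℂ) :
    pArea (a • x + b • y) (c • x + d • y) = ((a * d - b * c : ℤ) : ℝ) * pArea x y := by
  simp only [pArea_eq, zsmul_eq_mul, Complex.add_re, Complex.add_im, Complex.mul_re,
    Complex.mul_im, Complex.intCast_re, Complex.intCast_im]
  push_cast
  ring

lemma pArea_pos {v v' : ℂ} (hv : v ≠ 0) (h : 0 < (v' / v).im) : 0 < pArea v v' := by
  have hns : 0 < Complex.normSq v := Complex.normSq_pos.2 hv
  have key : (v' / v).im = pArea v v' / Complex.normSq v := by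
    rw [Complex.div_im, pArea_eq, Complex.normSq_apply]
    ring
  rw [key] at h
  have h2 := mul_pos h hns
  rwa [div_mul_cancel₀ _ (ne_of_gt hns)] at h2

/-- membership gives integer coordinates -/
lemma exists_coords {x y z : ℂ} (h : z ∈ AddSubgroup.closure ({x, y} : Set ℂ)) :
    ∃ m n : ℤ, m • x + n • y = z := AddSubgroup.mem_closure_pair.1 h

/-- for a minimal positive completion `v'` of `v`, the angle `α`
between `v` and `v'` (with `sin α = Im(conj v · v')/(|v||v'|)`) satisfies
`sin α ≥ area(L)/(((|v|/2)² + (area(L)/|v|)²)^{1/2} · |v|)`. -/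
theorem sin_angle_lower_bound (L : AddSubgroup ℂ) (w w' : ℂ)
    (hL : IsOrientedBasis L w w') (v v' : ℂ)
    (hmin : IsMinCompletion L v v') :
    pArea w w' /
        (Real.sqrt ((‖v‖ / 2) ^ 2 + (pArea w w' / ‖v‖) ^ 2) *
          ‖v‖) ≤
      pArea v v' / (‖v‖ * ‖v'‖) := by
  obtain ⟨⟨hpos, hclos⟩, hminle⟩ := hmin
  obtain ⟨hposw, hclosw⟩ := hL
  have hv : v ≠ 0 := by rintro rfl; simp at hpos
  have hw : w ≠ 0 := by rintro rfl; simp at hposw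
  have hA : 0 < pArea v v' := pArea_pos hv hpos
  have hAw : 0 < pArea w w' := pArea_pos hw hposw
  have hv' : v' ≠ 0 := by
    rintro rfl
    simp [pArea_eq] at hA
  have hvabs : (0:ℝ) < ‖v‖ := norm_pos_iff.2 hv
  have hv'abs : (0:ℝ) < ‖v'‖ := norm_pos_iff.2 hv'
  have hns : (0:ℝ) < Complex.normSq v := Complex.normSq_pos.2 hv
  -- Step 1: pArea w w' = pArea v v'
  have hcc : AddSubgroup.closure ({w, w'} : Set ℂ) = AddSubgroup.closure ({v, v'} : Set ℂ) :=
    hclosw.trans hclos.symm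
  obtain ⟨a, b, hab⟩ : ∃ m n : ℤ, m • v + n • v' = w :=
    exists_coords (hcc ▸ AddSubgroup.subset_closure (by simp) : w ∈ _)
  obtain ⟨c, d, hcd⟩ : ∃ m n : ℤ, m • v + n • v' = w' :=
    exists_coords (hcc ▸ AddSubgroup.subset_closure (by simp) : w' ∈ _)
  obtain ⟨p, q, hpq⟩ : ∃ m n : ℤ, m • w + n • w' = v :=
    exists_coords (hcc.symm ▸ AddSubgroup.subset_closure (by simp) : v ∈ _)
  obtain ⟨r, s, hrs⟩ : ∃ m n : ℤ, m • w + n • w' = v' :=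
    exists_coords (hcc.symm ▸ AddSubgroup.subset_closure (by simp) : v' ∈ _)
  have h1 : pArea w w' = ((a * d - b * c : ℤ) : ℝ) * pArea v v' := by
    rw [← hab, ← hcd, pArea_smul]
  have h2 : pArea v v' = ((p * s - q * r : ℤ) : ℝ) * pArea w w' := by
    rw [← hpq, ← hrs, pArea_smul]
  have hne : pArea w w' ≠ 0 := ne_of_gt hAw
  have hkk : ((a * d - b * c : ℤ) : ℝ) * ((p * s - q * r : ℤ) : ℝ) = 1 := by
    have hthis := h1
    rw [h2] at hthis
    have h3 : ((a * d - b * c : ℤ) : ℝ) * ((p * s - q * r : ℤ) : ℝ) * pArea w w'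
        = 1 * pArea w w' := by
      push_cast
      push_cast at hthis
      ring_nf at hthis ⊢
      linarith [hthis]
    exact mul_right_cancel₀ hne h3
  have hk1 : ((a * d - b * c : ℤ) : ℝ) = 1 := by
    have hZ : (a * d - b * c) * (p * s - q * r) = 1 := by exact_mod_cast hkk
    rcases Int.eq_one_or_neg_one_of_mul_eq_one hZ with h | h
    · exact_mod_cast h
    · exfalso
      rw [h] at h1
      push_cast at h1
      nlinarith
  have hAeq : pArea w w' = pArea v v' := by rw [h1, hk1, one_mul]
  rw [hAeq]
  -- Step 2: the shifted vector u = v' + n • v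
  set t : ℝ := ((starRingEnd ℂ) v * v').re / Complex.normSq v with ht
  set n : ℤ := -round t with hn
  set u : ℂ := v' + n • v with hu
  have horient : 0 < (u / v).im := by
    have : u / v = v' / v + (n : ℂ) := by
      rw [hu, zsmul_eq_mul, add_div, mul_div_cancel_right₀ _ hv]
    rw [this, Complex.add_im, Complex.intCast_im, add_zero]
    exact hpos
  have hclosu : AddSubgroup.closure ({v, u} : Set ℂ) = AddSubgroup.closure ({v, v'} : Set ℂ) := by
    apply le_antisymm
    · rw [AddSubgroup.closure_le]
      rintro z (rfl | rfl)
      · exact AddSubgroup.subset_closure (by simp)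
      · exact AddSubgroup.mem_closure_pair.2 ⟨n, 1, by rw [hu, one_smul, add_comm]⟩
    · rw [AddSubgroup.closure_le]
      rintro z (rfl | rfl)
      · exact AddSubgroup.subset_closure (by simp)
      · exact AddSubgroup.mem_closure_pair.2 ⟨-n, 1, by rw [hu, one_smul, neg_smul]; abel⟩
  have hle : ‖v'‖ ≤ ‖u‖ := hminle u ⟨horient, hclosu.trans hclos⟩
  -- Step 3: bound |u|
  have e2 : t * Complex.normSq v = ((starRingEnd ℂ) v * v').re := by
    rw [ht]; field_simp
  have e1 : (starRingEnd ℂ) v * u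
      = (starRingEnd ℂ) v * v' + (((n : ℝ) * Complex.normSq v : ℝ) : ℂ) := by
    rw [hu, zsmul_eq_mul, mul_add]
    push_cast
    rw [Complex.normSq_eq_conj_mul_self]
    ring
  have hre : ((starRingEnd ℂ) v * u).re = Complex.normSq v * (t - round t) := by
    rw [e1, Complex.add_re, Complex.ofReal_re, hn]
    push_cast
    linarith [e2]
  have him : ((starRingEnd ℂ) v * u).im = pArea v v' := by
    rw [e1, Complex.add_im, Complex.ofReal_im, add_zero, pArea]
  have habs_u_sq : (‖u‖) ^ 2 * Complex.normSq v
      = ((starRingEnd ℂ) v * u).re ^ 2 + ((starRingEnd ℂ) v * u).im ^ 2 := by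
    rw [Complex.sq_norm]
    have h4 : Complex.normSq ((starRingEnd ℂ) v * u) = Complex.normSq u * Complex.normSq v := by
      rw [map_mul, Complex.normSq_conj]; ring
    rw [← h4, Complex.normSq_apply]; ring
  have hround : |t - round t| ≤ 1 / 2 := abs_sub_round t
  have hre_bound : ((starRingEnd ℂ) v * u).re ^ 2 ≤ (Complex.normSq v / 2) ^ 2 := by
    rw [hre]
    have h5 : (t - round t) ^ 2 ≤ (1/2 : ℝ) ^ 2 :=
      calc (t - round t) ^ 2 = |t - round t| ^ 2 := (_root_.sq_abs _).symm
        _ ≤ (1/2 : ℝ) ^ 2 := pow_le_pow_left₀ (abs_nonneg _) hround 2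
    nlinarith [sq_nonneg (Complex.normSq v), hns.le]
  have hnsv : Complex.normSq v = ‖v‖ ^ 2 := (Complex.sq_norm v).symm
  have husq : (‖u‖) ^ 2 ≤ (‖v‖ / 2) ^ 2 + (pArea v v' / ‖v‖) ^ 2 := by
    have h5 := habs_u_sq
    rw [him] at h5
    have hbound : (‖u‖) ^ 2 * (‖v‖ ^ 2)
        ≤ (‖v‖ ^ 2 / 2) ^ 2 + pArea v v' ^ 2 := by
      rw [← hnsv, h5]
      rw [← hnsv] at *
      linarith [hre_bound]
    have hden : (0:ℝ) < ‖v‖ ^ 2 := by positivity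
    have expand : (‖v‖ / 2) ^ 2 + (pArea v v' / ‖v‖) ^ 2
        = ((‖v‖ ^ 2 / 2) ^ 2 + pArea v v' ^ 2) / (‖v‖ ^ 2) := by
      field_simp
    rw [expand, le_div_iff₀ hden]
    linarith [hbound]
  have hsqrt : ‖v'‖ ≤
      Real.sqrt ((‖v‖ / 2) ^ 2 + (pArea v v' / ‖v‖) ^ 2) := by
    rw [Real.le_sqrt (norm_nonneg v') (by positivity)]
    calc ‖v'‖ ^ 2 ≤ ‖u‖ ^ 2 :=
          pow_le_pow_left₀ (norm_nonneg v') hle 2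
      _ ≤ _ := husq
  apply div_le_div_of_nonneg_left (le_of_lt hA) (by positivity)
  calc ‖v‖ * ‖v'‖ ≤ ‖v‖ *
        Real.sqrt ((‖v‖ / 2) ^ 2 + (pArea v v' / ‖v‖) ^ 2) := by
        exact mul_le_mul_of_nonneg_left hsqrt (le_of_lt hvabs)
    _ = _ := mul_comm _ _
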